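/- A linear operator φ on R^n preserves majorization on the set of zero-sum vectors if and only if its matrix has the form v e^t + λ P for some v ∈ R^n, λ ∈ R, and permutation matrix P. -/

import Mathlib

open Matrix

/-- `P` is a permutation matrix. -/
def IsPermMatrix {n : ℕ} (P : Matrix (Fin n) (Fin n) ℝ) : Prop :=
  ∃ σ : Equiv.Perm (Fin n), P = σ.permMatrix ℝ

/-- Vector majorization: `a = D b` for some doubly stochastic `D`. -/
def VecMaj {n : ℕ} (a b : Fin n → ℝ) : Prop :=
  ∃ D ∈ doublyStochastic ℝ (Fin n), a = D.mulVec b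

/-- Strong majorization of matrices: `A = D B` for some doubly stochastic `D`. -/
def StrongMaj {n m : ℕ} (A B : Matrix (Fin n) (Fin m) ℝ) : Prop :=
  ∃ D ∈ doublyStochastic ℝ (Fin n), A = D * B

/-- `a` is a permutation of `b`. -/
def PermOf {n : ℕ} (a b : Fin n → ℝ) : Prop :=
  ∃ σ : Equiv.Perm (Fin n), ∀ i, a i = b (σ i)

namespace Stmt17

lemma permMatrix_mulVec {n : ℕ} (σ : Equiv.Perm (Fin n)) (x : Fin n → ℝ) :
    (σ.permMatrix ℝ) *ᵥ x = fun m => x (σ m) := by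
  funext m
  simp only [Equiv.Perm.permMatrix, mulVec, dotProduct, PEquiv.toMatrix_toPEquiv_eq,
    Matrix.submatrix_apply, Matrix.one_apply]
  simp

lemma vecMaj_of_comp {n : ℕ} (σ : Equiv.Perm (Fin n)) (x : Fin n → ℝ) :
    VecMaj (fun m => x (σ m)) x :=
  ⟨σ.permMatrix ℝ, permMatrix_mem_doublyStochastic, (permMatrix_mulVec σ x).symm⟩

lemma sum_eq_of_comp {n : ℕ} (σ : Equiv.Perm (Fin n)) (x : Fin n → ℝ) :
    ∑ i, x (σ i) = ∑ i, x i := Equiv.sum_comp σ x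

/-- positive-part sums inequality from majorization -/
lemma posPart_sum_le {n : ℕ} {x y : Fin n → ℝ} (h : VecMaj x y) (t : ℝ) :
    ∑ i, max (x i - t) 0 ≤ ∑ i, max (y i - t) 0 := by
  obtain ⟨D, hD, rfl⟩ := h
  have hrow := sum_row_of_mem_doublyStochastic hD
  have hcol := sum_col_of_mem_doublyStochastic hD
  have hnn : ∀ i j, 0 ≤ D i j := fun i j => nonneg_of_mem_doublyStochastic hD
  have key : ∀ i, max ((D *ᵥ y) i - t) 0 ≤ ∑ j, D i j * max (y j - t) 0 := by
    intro i
    apply max_le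
    · have : (D *ᵥ y) i - t = ∑ j, D i j * (y j - t) := by
        simp only [mulVec, dotProduct, mul_sub, Finset.sum_sub_distrib, ← Finset.sum_mul,
          hrow i, one_mul]
      rw [this]
      exact Finset.sum_le_sum fun j _ => mul_le_mul_of_nonneg_left (le_max_left _ _) (hnn i j)
    · exact Finset.sum_nonneg fun j _ => mul_nonneg (hnn i j) (le_max_right _ _)
  calc ∑ i, max ((D *ᵥ y) i - t) 0 ≤ ∑ i, ∑ j, D i j * max (y j - t) 0 :=
        Finset.sum_le_sum fun i _ => key i
    _ = ∑ j, (∑ i, D i j) * max (y j - t) 0 := by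
        rw [Finset.sum_comm]; simp only [Finset.sum_mul]
    _ = ∑ j, max (y j - t) 0 := by simp only [hcol, one_mul]

/-- two monotone tuples with equal positive-part sums agree -/
lemma monotone_eq_aux {n : ℕ} {f g : Fin n → ℝ} (hf : Monotone f) (hg : Monotone g)
    (h : ∀ t, ∑ i, max (f i - t) 0 = ∑ i, max (g i - t) 0) : f = g := by
  by_contra hne
  have hS : (Finset.univ.filter fun i => f i ≠ g i).Nonempty := by
    rw [Finset.filter_nonempty_iff]
    push_neg at hne
    obtain ⟨i, hi⟩ := Function.ne_iff.1 hne
    exact ⟨i, Finset.mem_univ i, hi⟩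
  obtain ⟨i₀, hi₀mem, hi₀max⟩ := Finset.exists_max_image _ id hS
  simp only [Finset.mem_filter] at hi₀mem
  have htail : ∀ j, i₀ < j → f j = g j := by
    intro j hj
    by_contra hc
    have := hi₀max j (Finset.mem_filter.2 ⟨Finset.mem_univ j, hc⟩)
    simp only [id] at this
    exact absurd (lt_of_lt_of_le hj this) (lt_irrefl _)
  -- wlog f i₀ < g i₀
  have main : ∀ (f g : Fin n → ℝ), Monotone f → Monotone g →
      (∀ t, ∑ i, max (f i - t) 0 = ∑ i, max (g i - t) 0) →
      (∀ j, i₀ < j → f j = g j) → ¬ (f i₀ < g i₀) := by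
    intro f g hf _ h htail hlt
    set t := f i₀ with ht
    have hsplit : ∀ j : Fin n, max (f j - t) 0 ≤ max (g j - t) 0 → True := fun _ _ => trivial
    have hL : ∑ i, max (f i - t) 0 = ∑ i ∈ Finset.univ.filter (i₀ < ·), max (f i - t) 0 := by
      rw [← Finset.sum_filter_add_sum_filter_not Finset.univ (i₀ < ·)]
      have : ∑ i ∈ Finset.univ.filter (¬ i₀ < ·), max (f i - t) 0 = 0 := by
        apply Finset.sum_eq_zero
        intro j hj
        simp only [Finset.mem_filter, not_lt] at hj
        have : f j ≤ t := hf hj.2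
        simp [max_eq_right, sub_nonpos.2 this]
      rw [this, add_zero]
    have hR : ∑ i, max (g i - t) 0 ≥
        max (g i₀ - t) 0 + ∑ i ∈ Finset.univ.filter (i₀ < ·), max (g i - t) 0 := by
      rw [← Finset.sum_filter_add_sum_filter_not Finset.univ (i₀ < ·), add_comm]
      have h1 : max (g i₀ - t) 0 ≤ ∑ x ∈ Finset.filter (fun x => ¬i₀ < x) Finset.univ, max (g x - t) 0 := by
        apply Finset.single_le_sum (f := fun i => max (g i - t) 0)
        · intro j _; exact le_max_right _ _
        · simp
      exact add_le_add h1 le_rfl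
    have htaileq : ∑ i ∈ Finset.univ.filter (i₀ < ·), max (f i - t) 0
        = ∑ i ∈ Finset.univ.filter (i₀ < ·), max (g i - t) 0 := by
      apply Finset.sum_congr rfl
      intro j hj
      simp only [Finset.mem_filter] at hj
      rw [htail j hj.2]
    have hpos : 0 < max (g i₀ - t) 0 := by
      apply lt_max_of_lt_left
      linarith
    have := h t
    rw [hL, htaileq] at this
    linarith [hR, this]
  rcases lt_trichotomy (f i₀) (g i₀) with hlt | heq | hgt
  · exact main f g hf hg h htail hlt
  · exact hi₀mem.2 heq
  · exact main g f hg hf (fun t => (h t).symm) (fun j hj => (htail j hj).symm) hgt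


lemma permOf_of_mutual {n : ℕ} {x y : Fin n → ℝ}
    (h1 : ∀ t, ∑ i, max (x i - t) 0 ≤ ∑ i, max (y i - t) 0)
    (h2 : ∀ t, ∑ i, max (y i - t) 0 ≤ ∑ i, max (x i - t) 0)
    : ∃ σ : Equiv.Perm (Fin n), ∀ m, x m = y (σ m) := by
  classical
  set sx := Tuple.sort x
  set sy := Tuple.sort y
  have hfx : Monotone (x ∘ sx) := Tuple.monotone_sort x
  have hfy : Monotone (y ∘ sy) := Tuple.monotone_sort y
  have heq : (x ∘ sx) = (y ∘ sy) := by
    apply monotone_eq_aux hfx hfy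
    intro t
    have e1 : ∑ i, max ((x ∘ sx) i - t) 0 = ∑ i, max (x i - t) 0 :=
      Equiv.sum_comp sx (fun j => max (x j - t) 0)
    have e2 : ∑ i, max ((y ∘ sy) i - t) 0 = ∑ i, max (y i - t) 0 :=
      Equiv.sum_comp sy (fun j => max (y j - t) 0)
    rw [e1, e2]
    exact le_antisymm (h1 t) (h2 t)
  refine ⟨(sx.symm).trans sy, fun m => ?_⟩
  have := congrFun heq (sx.symm m)
  simpa using this

lemma lt_choose {n k : ℕ} (h2 : 2 ≤ k) (hk : k + 2 ≤ n) : n < n.choose k := by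
  induction n generalizing k with
  | zero => omega
  | succ n ih =>
    rcases eq_or_lt_of_le h2 with h | h
    · subst h
      rw [Nat.choose_two_right]
      have hd : 2 ∣ (n+1) * ((n+1) - 1) := by
        simpa [mul_comm] using (Nat.even_mul_succ_self n).two_dvd
      have h3 : (n+1) * 3 ≤ (n+1) * ((n+1)-1) :=
        Nat.mul_le_mul_left _ (by omega)
      omega
    · obtain ⟨j, rfl⟩ : ∃ j, k = j + 1 := ⟨k - 1, by omega⟩
      rw [Nat.choose_succ_succ]
      have ih1 : n < n.choose j := ih (by omega) (by omega)
      have pos : 0 < n.choose j.succ := Nat.choose_pos (by omega)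
      omega

lemma exists_perm_maps {n : ℕ} (A T : Finset (Fin n)) (h : A.card = T.card) :
    ∃ σ : Equiv.Perm (Fin n), ∀ k, (σ k ∈ T ↔ k ∈ A) := by
  classical
  let e : {x // x ∈ A} ≃ {x // x ∈ T} := Finset.equivOfCardEq h
  refine ⟨Equiv.extendSubtype e, fun k => ?_⟩
  by_cases hk : k ∈ A
  · simp only [hk, iff_true]
    exact Equiv.extendSubtype_mem e k hk
  · simp only [hk, iff_false]
    exact Equiv.extendSubtype_not_mem e k hk

lemma exists_perm_two {n : ℕ} {p q a b : Fin n} (hpq : p ≠ q) (hab : a ≠ b) :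
    ∃ σ : Equiv.Perm (Fin n), σ p = a ∧ σ q = b := by
  classical
  let τ₁ := Equiv.swap p a
  have hq' : τ₁ q ≠ a := by
    intro h
    exact hpq (τ₁.injective (h.trans (Equiv.swap_apply_left p a).symm)).symm
  let τ₂ := Equiv.swap (τ₁ q) b
  refine ⟨τ₁.trans τ₂, ?_, ?_⟩
  · simp only [Equiv.trans_apply]
    rw [Equiv.swap_apply_left]
    exact Equiv.swap_apply_of_ne_of_ne hq'.symm hab
  · simp only [Equiv.trans_apply]
    exact Equiv.swap_apply_left _ _

lemma shape_lemma {n : ℕ} (S : Finset (Fin n → ℝ)) (hcard : S.card ≤ n)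
    (hclosed : ∀ g ∈ S, ∀ σ : Equiv.Perm (Fin n), g ∘ σ ∈ S)
    {g : Fin n → ℝ} (hg : g ∈ S) {i₁ j₁ : Fin n} (hne : g i₁ ≠ g j₁) :
    ∃ (p : Fin n) (a b : ℝ), a ≠ b ∧ g p = a ∧ ∀ k, k ≠ p → g k = b := by
  classical
  have hij : i₁ ≠ j₁ := fun h => hne (by rw [h])
  have hn2 : 2 ≤ n := by
    have h2 : ({i₁, j₁} : Finset (Fin n)).card = 2 := Finset.card_pair hij
    calc 2 = ({i₁, j₁} : Finset (Fin n)).card := h2.symm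
      _ ≤ Finset.univ.card := Finset.card_le_univ _
      _ = n := by rw [Finset.card_univ, Fintype.card_fin]
  obtain ⟨imx, _, hmx⟩ := Finset.exists_max_image Finset.univ g ⟨i₁, Finset.mem_univ i₁⟩
  obtain ⟨imn, _, hmn⟩ := Finset.exists_min_image Finset.univ g ⟨i₁, Finset.mem_univ i₁⟩
  have hmx' : ∀ k, g k ≤ g imx := fun k => hmx k (Finset.mem_univ k)
  have hmn' : ∀ k, g imn ≤ g k := fun k => hmn k (Finset.mem_univ k)
  have hlt : g imn < g imx := by
    rcases lt_or_ge (g imn) (g imx) with h | h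
    · exact h
    · exfalso; apply hne
      have h1 : g i₁ = g imx := le_antisymm (hmx' i₁) (le_trans h (hmn' i₁))
      have h2 : g j₁ = g imx := le_antisymm (hmx' j₁) (le_trans h (hmn' j₁))
      rw [h1, h2]
  have hmxmn : imx ≠ imn := fun h => absurd (h ▸ hlt) (lt_irrefl _)
  set T := Finset.univ.filter (fun k => g k = g imx) with hT
  set B := Finset.univ.filter (fun k => g k = g imn) with hB
  have hTmem : ∀ k, k ∈ T ↔ g k = g imx := by intro k; simp [hT]
  have hBmem : ∀ k, k ∈ B ↔ g k = g imn := by intro k; simp [hB]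
  have hTne : imx ∈ T := (hTmem imx).2 rfl
  have hBne : imn ∈ B := (hBmem imn).2 rfl
  have hdisj : Disjoint T B := by
    rw [Finset.disjoint_left]
    intro k hk1 hk2
    rw [hTmem] at hk1; rw [hBmem] at hk2
    rw [hk1] at hk2
    exact absurd hk2 (ne_of_gt hlt)
  have hsumcard : T.card + B.card ≤ n := by
    have h := Finset.card_le_univ (T ∪ B)
    rw [Finset.card_union_of_disjoint hdisj] at h
    calc T.card + B.card ≤ Finset.univ.card := h
      _ = n := by rw [Finset.card_univ, Fintype.card_fin]
  have hkey : ∀ (U : Finset (Fin n)) (c : ℝ), (∀ k, k ∈ U ↔ g k = c) →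
      Nat.choose n U.card ≤ n := by
    intro U c hU
    let P : Finset (Finset (Fin n)) := Finset.univ.powersetCard U.card
    have hΦ : ∀ A ∈ P, ∃ h ∈ S, (∀ k, h k = c ↔ k ∈ A) := by
      intro A hA
      rw [Finset.mem_powersetCard] at hA
      obtain ⟨σ, hσ⟩ := exists_perm_maps A U hA.2
      refine ⟨g ∘ σ, hclosed g hg σ, fun k => ?_⟩
      constructor
      · intro h
        by_contra hk
        exact absurd ((hU (σ k)).2 h) (fun hc => hk ((hσ k).1 hc))
      · intro hk
        exact (hU (σ k)).1 ((hσ k).2 hk)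
    choose Φ hΦS hΦspec using hΦ
    have hcard2 : P.card ≤ S.card := by
      apply Finset.card_le_card_of_injOn (f := fun A =>
          if h : A ∈ P then Φ A h else g)
      · intro A hA
        simp only [dif_pos hA]
        have hA' : A ∈ P := hA; rw [dif_pos hA']; exact hΦS A hA'
      · intro A hA A' hA' h
        simp only [Finset.mem_coe] at hA hA'
        simp only [dif_pos hA, dif_pos hA'] at h
        ext k
        rw [← hΦspec A hA k, h, hΦspec A' hA' k]
    calc Nat.choose n U.card = P.card := by
          rw [Finset.card_powersetCard, Finset.card_univ, Fintype.card_fin]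
      _ ≤ S.card := hcard2
      _ ≤ n := hcard
  have hTcard : T.card = 1 ∨ T.card = n - 1 := by
    have h1 : 1 ≤ T.card := Finset.card_pos.2 ⟨imx, hTne⟩
    have h3 : 1 ≤ B.card := Finset.card_pos.2 ⟨imn, hBne⟩
    have h4 := hkey T (g imx) hTmem
    by_contra hcon
    push_neg at hcon
    have : n < Nat.choose n T.card := lt_choose (by omega) (by omega)
    omega
  have hBcard : B.card = 1 ∨ B.card = n - 1 := by
    have h1 : 1 ≤ B.card := Finset.card_pos.2 ⟨imn, hBne⟩
    have h3 : 1 ≤ T.card := Finset.card_pos.2 ⟨imx, hTne⟩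
    have h4 := hkey B (g imn) hBmem
    by_contra hcon
    push_neg at hcon
    have : n < Nat.choose n B.card := lt_choose (by omega) (by omega)
    omega
  have hfrombig : ∀ (U : Finset (Fin n)) (c : ℝ), (∀ k, k ∈ U ↔ g k = c) →
      U.card = n - 1 → (∃ w, w ∉ U) → ∃ (p : Fin n) (a b : ℝ),
        a ≠ b ∧ g p = a ∧ ∀ k, k ≠ p → g k = b := by
    intro U c hU hUcard hex
    obtain ⟨w, hw⟩ := hex
    have hcompl : (Finset.univ \ U).card = 1 := by
      rw [Finset.card_sdiff_of_subset (Finset.subset_univ U), Finset.card_univ, Fintype.card_fin, hUcard]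
      omega
    obtain ⟨p, hp⟩ := Finset.card_eq_one.1 hcompl
    have hwp : w = p := by
      have : w ∈ Finset.univ \ U := Finset.mem_sdiff.2 ⟨Finset.mem_univ w, hw⟩
      rw [hp] at this; exact Finset.mem_singleton.1 this
    subst hwp
    refine ⟨w, g w, c, ?_, rfl, ?_⟩
    · intro h
      exact hw ((hU w).2 h)
    · intro k hk
      apply (hU k).1
      by_contra hkU
      have : k ∈ Finset.univ \ U := Finset.mem_sdiff.2 ⟨Finset.mem_univ k, hkU⟩
      rw [hp] at this
      exact hk (Finset.mem_singleton.1 this)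
  have hBnotmx : imx ∉ B := by
    intro h
    rw [hBmem] at h
    exact absurd h (ne_of_gt hlt)
  have hTnotmn : imn ∉ T := by
    intro h
    rw [hTmem] at h
    have := h ▸ hlt
    exact absurd this (lt_irrefl _)
  rcases hTcard with hT1 | hTbig
  case inr =>
    exact hfrombig T (g imx) hTmem hTbig ⟨imn, hTnotmn⟩
  rcases hBcard with hB1 | hBbig
  case inr =>
    exact hfrombig B (g imn) hBmem hBbig ⟨imx, hBnotmx⟩
  by_cases hcover : ∀ k, k ∈ T ∨ k ∈ B
  · have hn2' : n ≤ 2 := by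
      have hsub : Finset.univ ⊆ T ∪ B := fun k _ => Finset.mem_union.2 (hcover k)
      have hc := Finset.card_le_card hsub
      rw [Finset.card_union_of_disjoint hdisj, hT1, hB1] at hc
      calc n = Finset.univ.card := by rw [Finset.card_univ, Fintype.card_fin]
        _ ≤ 2 := hc
    have hBn1 : B.card = n - 1 := by omega
    exact hfrombig B (g imn) hBmem hBn1 ⟨imx, hBnotmx⟩
  · push_neg at hcover
    obtain ⟨k₀, hk₀T, hk₀B⟩ := hcover
    exfalso
    have hTsing : T = {imx} := by
      obtain ⟨a, ha⟩ := Finset.card_eq_one.1 hT1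
      rw [ha] at hTne
      rw [ha, Finset.mem_singleton.1 hTne]
    have hBsing : B = {imn} := by
      obtain ⟨a, ha⟩ := Finset.card_eq_one.1 hB1
      rw [ha] at hBne
      rw [ha, Finset.mem_singleton.1 hBne]
    have hmxT : ∀ k, g k = g imx ↔ k = imx := by
      intro k
      rw [← hTmem k, hTsing, Finset.mem_singleton]
    have hmnB : ∀ k, g k = g imn ↔ k = imn := by
      intro k
      rw [← hBmem k, hBsing, Finset.mem_singleton]
    let OD : Finset (Fin n × Fin n) := Finset.univ.offDiag
    have hΨ : ∀ pq ∈ OD, ∃ h ∈ S,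
        (∀ k, h k = g imx ↔ k = pq.1) ∧ (∀ k, h k = g imn ↔ k = pq.2) := by
      rintro ⟨p, q⟩ hpq
      rw [Finset.mem_offDiag] at hpq
      obtain ⟨σ, hσ1, hσ2⟩ := exists_perm_two hpq.2.2 hmxmn
      refine ⟨g ∘ σ, hclosed g hg σ, fun k => ?_, fun k => ?_⟩
      · rw [Function.comp_apply, hmxT]
        constructor
        · intro h
          exact σ.injective (h.trans hσ1.symm)
        · intro h; rw [h, hσ1]
      · rw [Function.comp_apply, hmnB]
        constructor
        · intro h
          exact σ.injective (h.trans hσ2.symm)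
        · intro h; rw [h, hσ2]
    choose Ψ hΨS hΨ1 hΨ2 using hΨ
    have hcard3 : OD.card ≤ S.card := by
      apply Finset.card_le_card_of_injOn (f := fun pq =>
          if h : pq ∈ OD then Ψ pq h else g)
      · intro pq hpq
        simp only [dif_pos hpq]
        have hpq' : pq ∈ OD := hpq; rw [dif_pos hpq']; exact hΨS pq hpq'
      · intro pq hpq pq' hpq' h
        simp only [Finset.mem_coe] at hpq hpq'
        simp only [dif_pos hpq, dif_pos hpq'] at h
        have e1 : pq.1 = pq'.1 := by
          have h2 := (hΨ1 pq' hpq' pq.1).1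
          rw [← h] at h2
          exact h2 ((hΨ1 pq hpq pq.1).2 rfl)
        have e2 : pq.2 = pq'.2 := by
          have h2 := (hΨ2 pq' hpq' pq.2).1
          rw [← h] at h2
          exact h2 ((hΨ2 pq hpq pq.2).2 rfl)
        exact Prod.ext e1 e2
    have hod : OD.card = n * n - n := by
      show (Finset.univ.offDiag (α := Fin n)).card = n * n - n
      rw [Finset.offDiag_card, Finset.card_univ, Fintype.card_fin]
    have hn3 : 3 ≤ n := by
      have hcard3' : ({imx, imn, k₀} : Finset (Fin n)).card = 3 := by
        rw [Finset.card_insert_of_notMem, Finset.card_insert_of_notMem, Finset.card_singleton]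
        · simp only [Finset.mem_singleton]
          intro h
          exact hk₀B (h ▸ hBne)
        · simp only [Finset.mem_insert, Finset.mem_singleton]
          push_neg
          refine ⟨hmxmn, fun h => hk₀T (h ▸ hTne)⟩
      calc 3 = ({imx, imn, k₀} : Finset (Fin n)).card := hcard3'.symm
        _ ≤ Finset.univ.card := Finset.card_le_univ _
        _ = n := by rw [Finset.card_univ, Fintype.card_fin]
    have hnn : 3 * n ≤ n * n := Nat.mul_le_mul_right n hn3
    omega

lemma permMatrix_apply {n : ℕ} (σ : Equiv.Perm (Fin n)) (i j : Fin n) :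
    σ.permMatrix ℝ i j = if σ i = j then 1 else 0 := by
  rw [Equiv.Perm.permMatrix, PEquiv.toMatrix_toPEquiv_eq, Matrix.submatrix_apply, Matrix.one_apply]
  rfl


end Stmt17

open Stmt17 in
theorem stmt17 {n : ℕ} (φ : (Fin n → ℝ) →ₗ[ℝ] (Fin n → ℝ)) :
    (∀ a b : Fin n → ℝ, ∑ i, a i = 0 → ∑ i, b i = 0 →
      VecMaj a b → VecMaj (φ a) (φ b)) ↔
    ∃ (v : Fin n → ℝ) (lam : ℝ) (Q : Matrix (Fin n) (Fin n) ℝ),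
      IsPermMatrix Q ∧
        LinearMap.toMatrix' φ = (Matrix.of fun i _ => v i) + lam • Q := by
  classical
  constructor
  · -- hard direction
    intro H
    set c : Fin n → Fin n → ℝ := fun j => φ (Pi.single j 1) with hc
    have stepA : ∀ (σ : Equiv.Perm (Fin n)) (x : Fin n → ℝ), (∑ i, x i = 0) →
        ∃ ρ : Equiv.Perm (Fin n), ∀ m, φ (fun k => x (σ k)) m = φ x (ρ m) := by
      intro σ x hx
      have hxσ : ∑ i, x (σ i) = 0 := by rw [Equiv.sum_comp σ x]; exact hx
      have h1 : VecMaj (fun k => x (σ k)) x := vecMaj_of_comp σ x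
      have h2 : VecMaj x (fun k => x (σ k)) := by
        have := vecMaj_of_comp σ⁻¹ (fun k => x (σ k))
        simpa using this
      have m1 := H _ _ hxσ hx h1
      have m2 := H _ _ hx hxσ h2
      exact permOf_of_mutual (fun t => posPart_sum_le m1 t) (fun t => posPart_sum_le m2 t)
    have stepB : ∀ (σ : Equiv.Perm (Fin n)), ∃ ρ : Equiv.Perm (Fin n),
        ∀ x : Fin n → ℝ, (∑ i, x i = 0) → ∀ m, φ (fun k => x (σ k)) m = φ x (ρ m) := by
      intro σ
      set sumF : (Fin n → ℝ) →ₗ[ℝ] ℝ := ∑ i, LinearMap.proj i with hsumF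
      have hsumF_apply : ∀ x : Fin n → ℝ, sumF x = ∑ i, x i := by
        intro x
        simp [hsumF, LinearMap.sum_apply, LinearMap.proj_apply]
      set V : Submodule ℝ (Fin n → ℝ) := LinearMap.ker sumF with hV
      have hVmem : ∀ x, x ∈ V ↔ ∑ i, x i = 0 := by
        intro x
        rw [hV, LinearMap.mem_ker, hsumF_apply]
      set L : Equiv.Perm (Fin n) → ((Fin n → ℝ) →ₗ[ℝ] (Fin n → ℝ)) := fun ρ =>
        φ.comp (LinearMap.funLeft ℝ ℝ σ) - (LinearMap.funLeft ℝ ℝ ρ).comp φ with hL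
      set p : Equiv.Perm (Fin n) → Submodule ℝ ↥V := fun ρ =>
        (LinearMap.ker (L ρ)).comap V.subtype with hp
      have hcov : ⋃ ρ, ((p ρ : Submodule ℝ ↥V) : Set ↥V) = Set.univ := by
        ext x
        simp only [Set.mem_iUnion, Set.mem_univ, iff_true]
        obtain ⟨ρ, hρ⟩ := stepA σ x.1 ((hVmem x.1).1 x.2)
        refine ⟨ρ, ?_⟩
        show x.1 ∈ LinearMap.ker (L ρ)
        rw [LinearMap.mem_ker, hL]
        simp only [LinearMap.sub_apply, LinearMap.comp_apply, LinearMap.funLeft_apply]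
        rw [sub_eq_zero]
        funext m
        exact hρ m
      obtain ⟨ρ, hρtop⟩ := Subspace.exists_eq_top_of_iUnion_eq_univ hcov
      refine ⟨ρ, fun x hx m => ?_⟩
      have hxV : x ∈ V := (hVmem x).2 hx
      have hmem : (⟨x, hxV⟩ : ↥V) ∈ p ρ := by rw [hρtop]; trivial
      rw [hp] at hmem
      simp only [Submodule.mem_comap, Submodule.coe_subtype, LinearMap.mem_ker, hL,
        LinearMap.sub_apply, LinearMap.comp_apply, LinearMap.funLeft_apply] at hmem
      rw [sub_eq_zero] at hmem
      exact congrFun hmem m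
    have husum : ∀ i j : Fin n, ∑ k, (Pi.single i 1 - Pi.single j 1 : Fin n → ℝ) k = 0 := by
      intro i j
      simp [Finset.sum_sub_distrib]
    have hphi_u : ∀ i j : Fin n,
        φ (Pi.single i 1 - Pi.single j 1) = fun m => c i m - c j m := by
      intro i j
      rw [map_sub]
      rfl
    set Ntil : Fin n → Fin n → ℝ := fun m i => (n : ℝ) * c i m - ∑ k, c k m with hNtil
    have stepC : ∀ (σ : Equiv.Perm (Fin n)), ∃ ρ : Equiv.Perm (Fin n),
        ∀ m i, Ntil (ρ m) i = Ntil m (σ⁻¹ i) := by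
      intro σ
      obtain ⟨ρ, hρ⟩ := stepB σ
      refine ⟨ρ, fun m i => ?_⟩
      have hrel : ∀ j, c (σ⁻¹ i) m - c (σ⁻¹ j) m = c i (ρ m) - c j (ρ m) := by
        intro j
        have h1 := hρ (Pi.single i 1 - Pi.single j 1) (husum i j) m
        have hcomp : (fun k => (Pi.single i 1 - Pi.single j 1 : Fin n → ℝ) (σ k))
            = (Pi.single (σ⁻¹ i) 1 - Pi.single (σ⁻¹ j) 1 : Fin n → ℝ) := by
          funext k
          simp only [Pi.sub_apply, Pi.single_apply]
          have e1 : (σ k = i) ↔ (k = σ⁻¹ i) := by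
            constructor
            · intro h; simp [← h]
            · intro h; simp [h]
          have e2 : (σ k = j) ↔ (k = σ⁻¹ j) := by
            constructor
            · intro h; simp [← h]
            · intro h; simp [h]
          simp only [e1, e2]
        rw [hcomp, hphi_u, hphi_u] at h1
        exact h1
      have hsum2 : ∑ j, (c (σ⁻¹ i) m - c (σ⁻¹ j) m) = ∑ j, (c i (ρ m) - c j (ρ m)) :=
        Finset.sum_congr rfl (fun j _ => hrel j)
      have hre : ∑ j, c (σ⁻¹ j) m = ∑ j, c j m := Equiv.sum_comp σ⁻¹ (fun j => c j m)
      rw [Finset.sum_sub_distrib, Finset.sum_sub_distrib, Finset.sum_const, Finset.sum_const,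
        hre] at hsum2
      simp only [Finset.card_univ, Fintype.card_fin, nsmul_eq_mul] at hsum2
      simp only [hNtil]
      linarith [hsum2]
    set S : Finset (Fin n → ℝ) := Finset.image Ntil Finset.univ with hS
    have hScard : S.card ≤ n := by
      calc S.card ≤ Finset.univ.card := Finset.card_image_le
        _ = n := by rw [Finset.card_univ, Fintype.card_fin]
    have hSclosed : ∀ g ∈ S, ∀ π : Equiv.Perm (Fin n), g ∘ π ∈ S := by
      intro g hg π
      rw [hS, Finset.mem_image] at hg
      obtain ⟨m, _, hm⟩ := hg
      obtain ⟨ρ, hρ⟩ := stepC π⁻¹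
      rw [hS, Finset.mem_image]
      refine ⟨ρ m, Finset.mem_univ _, ?_⟩
      funext i
      rw [hρ m i]
      simp only [inv_inv]
      rw [← hm]
      rfl
    by_cases hconst : ∀ m i j, Ntil m i = Ntil m j
    · refine ⟨fun m => (∑ k, c k m) / n, 0, (1 : Equiv.Perm (Fin n)).permMatrix ℝ,
        ⟨1, rfl⟩, ?_⟩
      ext m j
      rw [LinearMap.toMatrix'_apply]
      have hsingle : (fun j' => if j' = j then (1:ℝ) else 0) = Pi.single j 1 := by
        funext k; simp [Pi.single_apply]
      simp only [Matrix.add_apply, Matrix.of_apply, zero_smul, Matrix.zero_apply, add_zero]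
      have hn : (0:ℝ) < n := by exact_mod_cast m.pos
      have hcc : ∀ i, c i m = c j m := by
        intro i
        have h2 := hconst m i j
        simp only [hNtil] at h2
        nlinarith [h2]
      have hsum : ∑ k, c k m = n * c j m := by
        rw [Finset.sum_congr rfl (fun k _ => hcc k)]
        simp [Finset.card_univ, mul_comm]
      show c j m = (∑ k, c k m) / n
      rw [hsum]
      field_simp
    · push_neg at hconst
      obtain ⟨m₀, i₀, j₀, hne0⟩ := hconst
      have hgS : Ntil m₀ ∈ S := by
        rw [hS, Finset.mem_image]
        exact ⟨m₀, Finset.mem_univ _, rfl⟩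
      obtain ⟨p₀, a, b, hab, hpa, hpb⟩ := shape_lemma S hScard hSclosed hgS hne0
      set hfun : Fin n → (Fin n → ℝ) := fun p i => if i = p then a else b with hhfun
      have hinj : Function.Injective hfun := by
        intro p q h
        by_contra hpq
        have h2 := congrFun h p
        simp only [hhfun, if_pos rfl] at h2
        rw [if_neg hpq] at h2
        exact hab h2
      set O : Finset (Fin n → ℝ) := Finset.image hfun Finset.univ with hO
      have hOsub : O ⊆ S := by
        intro g hg
        rw [hO, Finset.mem_image] at hg
        obtain ⟨p, _, hp⟩ := hg
        have heq : hfun p = Ntil m₀ ∘ (Equiv.swap p₀ p) := by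
          funext i
          simp only [Function.comp_apply, hhfun]
          by_cases h : i = p
          · rw [if_pos h, h, Equiv.swap_apply_right, hpa]
          · rw [if_neg h]
            rw [hpb]
            intro hcon
            apply h
            exact (Equiv.swap p₀ p).injective (hcon.trans (Equiv.swap_apply_right p₀ p).symm)
        rw [← hp, heq]
        exact hSclosed _ hgS _
      have hOcard : O.card = n := by
        rw [hO, Finset.card_image_of_injective _ hinj, Finset.card_univ, Fintype.card_fin]
      have hSO : S = O := (Finset.eq_of_subset_of_card_le hOsub (by omega)).symm
      have hNinjOn : Set.InjOn Ntil (Finset.univ : Finset (Fin n)) := by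
        apply Finset.injOn_of_card_image_eq
        rw [← hS, hSO, hOcard, Finset.card_univ, Fintype.card_fin]
      have hNinj : Function.Injective Ntil := fun m m' h =>
        hNinjOn (Finset.mem_coe.2 (Finset.mem_univ m)) (Finset.mem_coe.2 (Finset.mem_univ m')) h
      have hpfun : ∀ m, ∃ p, Ntil m = hfun p := by
        intro m
        have : Ntil m ∈ O := by
          rw [← hSO, hS, Finset.mem_image]
          exact ⟨m, Finset.mem_univ _, rfl⟩
        rw [hO, Finset.mem_image] at this
        obtain ⟨p, _, hp⟩ := this
        exact ⟨p, hp.symm⟩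
      choose pfun hpf using hpfun
      have hpinj : Function.Injective pfun := by
        intro m m' h
        apply hNinj
        rw [hpf m, hpf m', h]
      have hpbij : Function.Bijective pfun := Finite.injective_iff_bijective.1 hpinj
      set τ : Equiv.Perm (Fin n) := Equiv.ofBijective pfun hpbij with hτ
      have hn : (0:ℝ) < n := by exact_mod_cast m₀.pos
      refine ⟨fun m => ((∑ k, c k m) + b) / n, (a - b) / n, τ.permMatrix ℝ, ⟨τ, rfl⟩, ?_⟩
      ext m j
      rw [LinearMap.toMatrix'_apply]
      have hsingle : (fun j' => if j' = j then (1:ℝ) else 0) = Pi.single j 1 := by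
        funext k; simp [Pi.single_apply]
      simp only [Matrix.add_apply, Matrix.of_apply, Matrix.smul_apply, permMatrix_apply,
        smul_eq_mul]
      have hvals := congrFun (hpf m) j
      simp only [hhfun] at hvals
      have hτm : τ m = pfun m := rfl
      show c j m = ((∑ k, c k m) + b) / n + (a - b) / n * (if τ m = j then 1 else 0)
      rw [hτm]
      by_cases h : j = pfun m
      · rw [if_pos h] at hvals
        rw [if_pos h.symm]
        simp only [hNtil] at hvals
        field_simp
        linarith [hvals]
      · rw [if_neg h] at hvals
        rw [if_neg (fun hh => h hh.symm)]
        simp only [hNtil] at hvals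
        field_simp
        linarith [hvals]
  · -- easy direction
    rintro ⟨v, lam, Q, ⟨σ, rfl⟩, hM⟩ a b ha hb ⟨D, hD, hab⟩
    have hφ : ∀ (x : Fin n → ℝ), (∑ i, x i = 0) → φ x = lam • fun m => x (σ m) := by
      intro x hx
      have h1 : φ x = (LinearMap.toMatrix' φ) *ᵥ x := by
        rw [← Matrix.toLin'_apply, Matrix.toLin'_toMatrix']
      rw [hM, Matrix.add_mulVec, Matrix.smul_mulVec] at h1
      have h2 : (Matrix.of fun i _ => v i) *ᵥ x = 0 := by
        funext m
        simp only [Matrix.mulVec, dotProduct, Matrix.of_apply]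
        rw [← Finset.mul_sum, hx, mul_zero]
        rfl
      rw [h2, zero_add, Stmt17.permMatrix_mulVec] at h1
      exact h1
    rw [hφ a ha, hφ b hb]
    set Pσ := σ.permMatrix ℝ
    set Pτ := (σ⁻¹).permMatrix ℝ
    refine ⟨Pσ * (D * Pτ), ?_, ?_⟩
    · exact Submonoid.mul_mem _ permMatrix_mem_doublyStochastic
        (Submonoid.mul_mem _ hD permMatrix_mem_doublyStochastic)
    · rw [Matrix.mulVec_smul]
      have e1 : Pτ *ᵥ (fun m => b (σ m)) = b := by
        rw [Stmt17.permMatrix_mulVec]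
        funext m
        simp
      have e2 : (Pσ * (D * Pτ)) *ᵥ (fun m => b (σ m)) = fun m => a (σ m) := by
        rw [← Matrix.mulVec_mulVec, ← Matrix.mulVec_mulVec, e1, ← hab, Stmt17.permMatrix_mulVec]
      rw [e2]
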